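/- Consider a Tree-PIN source on a tree G = ([m], E) (edge pairs (T_e, Y_e) mutually independent across edges, terminal variables X_k given by the incident edge components), with m ≥ 2 and A = [m]. Then min_{λ∈Λ([m])} ( H(X_{[m]}) − Σ_{B∈Γ([m])} λ_B H(X_B | X_{B^c}) ) = min_{e∈E} I(T_e ; Y_e); that is, the Csiszár–Narayan secret-key-capacity expression for a Tree-PIN source equals the smallest mutual information carried by a single edge of the tree. -/

import Mathlib

open Finset

/-- Probability that the random variable `X : Ω → α` takes the value `a`,
for a probability mass function `p` on the finite sample space `Ω`. -/
noncomputable def probOf {Ω α : Type*} [Fintype Ω] [DecidableEq α]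
    (p : Ω → ℝ) (X : Ω → α) (a : α) : ℝ :=
  ∑ ω ∈ Finset.univ.filter (fun ω => X ω = a), p ω

/-- Shannon entropy (in nats) of the random variable `X : Ω → α` under the
probability mass function `p`. -/
noncomputable def entropy {Ω α : Type*} [Fintype Ω] [Fintype α] [DecidableEq α]
    (p : Ω → ℝ) (X : Ω → α) : ℝ :=
  ∑ a : α, Real.negMulLog (probOf p X a)

/-- Conditional Shannon entropy `H(X | Y) = H(X, Y) - H(Y)`. -/
noncomputable def condEntropy {Ω α β : Type*} [Fintype Ω]
    [Fintype α] [DecidableEq α] [Fintype β] [DecidableEq β]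
    (p : Ω → ℝ) (X : Ω → α) (Y : Ω → β) : ℝ :=
  entropy p (fun ω => (X ω, Y ω)) - entropy p Y

/-- Mutual information `I(X ; Y) = H(X) + H(Y) - H(X, Y)`. -/
noncomputable def mutualInfo {Ω α β : Type*} [Fintype Ω]
    [Fintype α] [DecidableEq α] [Fintype β] [DecidableEq β]
    (p : Ω → ℝ) (X : Ω → α) (Y : Ω → β) : ℝ :=
  entropy p X + entropy p Y - entropy p (fun ω => (X ω, Y ω))

/-- Conditional mutual information `I(X ; Y | Z) = H(X|Z) + H(Y|Z) - H(X,Y|Z)`. -/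
noncomputable def condMutualInfo {Ω α β γ : Type*} [Fintype Ω]
    [Fintype α] [DecidableEq α] [Fintype β] [DecidableEq β]
    [Fintype γ] [DecidableEq γ]
    (p : Ω → ℝ) (X : Ω → α) (Y : Ω → β) (Z : Ω → γ) : ℝ :=
  condEntropy p X Z + condEntropy p Y Z - condEntropy p (fun ω => (X ω, Y ω)) Z

/-- The undirected simple graph on `[m]` underlying the directed edges
`e ↦ (tl e, hd e)`. -/
def graphOf {m : ℕ} {ε : Type*} (tl hd : ε → Fin m) : SimpleGraph (Fin m) :=
  SimpleGraph.fromRel (fun i j => ∃ e, tl e = i ∧ hd e = j)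

/-- In a Tree-PIN source on the tree with directed edges `e = (tl e, hd e)`, the
variable observed by terminal `k` is the tuple of the components `T_e` for edges `e`
leaving `k` together with the components `Y_e` for edges `e` entering `k`. -/
def termRV {Ω : Type*} {m : ℕ} {ε : Type*} (tl hd : ε → Fin m)
    {Tt Yt : ε → Type*} (Te : ∀ e, Ω → Tt e) (Ye : ∀ e, Ω → Yt e) (k : Fin m) :
    Ω → ((∀ e : {e : ε // tl e = k}, Tt e.1) × (∀ e : {e : ε // hd e = k}, Yt e.1)) :=
  fun ω => (fun e => Te e.1 ω, fun e => Ye e.1 ω)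

/-- The tuple `X_B = (X_k : k ∈ B)` of terminal variables of a Tree-PIN source. -/
def termTuple {Ω : Type*} {m : ℕ} {ε : Type*} (tl hd : ε → Fin m)
    {Tt Yt : ε → Type*} (Te : ∀ e, Ω → Tt e) (Ye : ∀ e, Ω → Yt e)
    (B : Finset (Fin m)) :
    Ω → (∀ k : B, ((∀ e : {e : ε // tl e = k.1}, Tt e.1) ×
      (∀ e : {e : ε // hd e = k.1}, Yt e.1))) :=
  fun ω k => termRV tl hd Te Ye k.1 ω

/-- The edge pairs `(T_e, Y_e)` are mutually independent across edges. -/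
def IndepEdgePairs {Ω : Type*} [Fintype Ω] {ε : Type*} [Fintype ε]
    {Tt Yt : ε → Type*} [∀ e, Fintype (Tt e)] [∀ e, DecidableEq (Tt e)]
    [∀ e, Fintype (Yt e)] [∀ e, DecidableEq (Yt e)]
    (p : Ω → ℝ) (Te : ∀ e, Ω → Tt e) (Ye : ∀ e, Ω → Yt e) : Prop :=
  ∀ x : ∀ e, Tt e × Yt e,
    probOf p (fun ω e => (Te e ω, Ye e ω)) x
      = ∏ e : ε, probOf p (fun ω => (Te e ω, Ye e ω)) (x e)

/-- `Γ(A)`: the family of all nonempty proper subsets `B ⊊ [m]` with `A ⊄ B`. -/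
def Gamma (m : ℕ) (A : Finset (Fin m)) : Finset (Finset (Fin m)) :=
  Finset.univ.filter (fun B => B.Nonempty ∧ B ≠ Finset.univ ∧ ¬ A ⊆ B)

/-- `λ ∈ Λ(A)`: a fractional partition, i.e. `0 ≤ λ_B ≤ 1` for every `B ∈ Γ(A)`
and `Σ_{B ∈ Γ(A) : j ∈ B} λ_B = 1` for every `j ∈ [m]`. -/
def memLambda (m : ℕ) (A : Finset (Fin m)) (lam : Finset (Fin m) → ℝ) : Prop :=
  (∀ B ∈ Gamma m A, 0 ≤ lam B ∧ lam B ≤ 1) ∧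
  ∀ j : Fin m, ∑ B ∈ (Gamma m A).filter (fun B => j ∈ B), lam B = 1


set_option linter.unusedSectionVars false
set_option maxHeartbeats 2000000
set_option synthInstance.maxHeartbeats 1000000
set_option synthInstance.maxSize 2048

section AuxBasic
variable {Ω α β : Type*} [Fintype Ω] [Fintype α] [DecidableEq α] [Fintype β] [DecidableEq β]

lemma probOf_nonneg (p : Ω → ℝ) (hp : ∀ ω, 0 ≤ p ω) (X : Ω → α) (a : α) :
    0 ≤ probOf p X a := Finset.sum_nonneg fun _ _ => hp _

lemma sum_probOf (p : Ω → ℝ) (X : Ω → α) : ∑ a, probOf p X a = ∑ ω, p ω := by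
  unfold probOf
  exact Finset.sum_fiberwise Finset.univ X p

lemma probOf_comp (p : Ω → ℝ) (X : Ω → α) (g : α → β) (b : β) :
    probOf p (fun ω => g (X ω)) b
      = ∑ a ∈ Finset.univ.filter (fun a => g a = b), probOf p X a := by
  unfold probOf
  rw [Finset.sum_fiberwise_eq_sum_filter Finset.univ (Finset.univ.filter (fun a => g a = b)) X p]
  apply Finset.sum_congr
  · ext ω; simp
  · intros; rfl

lemma entropy_const (p : Ω → ℝ) (hp1 : ∑ ω : Ω, p ω = 1) (c : α) :
    entropy p (fun _ => c) = 0 := by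
  unfold entropy
  apply Finset.sum_eq_zero
  intro a _
  by_cases h : a = c
  · subst h
    have : probOf p (fun _ : Ω => a) a = 1 := by
      unfold probOf
      rw [Finset.filter_true_of_mem (fun _ _ => rfl)]
      exact hp1
    rw [this, Real.negMulLog_one]
  · have : probOf p (fun _ : Ω => c) a = 0 := by
      unfold probOf
      rw [Finset.filter_false_of_mem (fun _ _ => fun hc => h hc.symm), Finset.sum_empty]
    rw [this, Real.negMulLog_zero]

-- marginals
lemma probOf_fst (p : Ω → ℝ) (X : Ω → α) (Y : Ω → β) (t : α) :
    probOf p X t = ∑ y : β, probOf p (fun ω => (X ω, Y ω)) (t, y) := by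
  have : ∀ y, probOf p (fun ω => (X ω, Y ω)) (t, y)
      = ∑ ω ∈ (Finset.univ.filter (fun ω => X ω = t)).filter (fun ω => Y ω = y), p ω := by
    intro y
    unfold probOf
    rw [Finset.filter_filter]
    apply Finset.sum_congr _ (fun _ _ => rfl)
    apply Finset.filter_congr
    intro ω _
    simp [Prod.ext_iff, and_comm]
  simp_rw [this]
  rw [Finset.sum_fiberwise (Finset.univ.filter (fun ω => X ω = t)) Y p]
  rfl

lemma probOf_snd (p : Ω → ℝ) (X : Ω → α) (Y : Ω → β) (y : β) :
    probOf p Y y = ∑ t : α, probOf p (fun ω => (X ω, Y ω)) (t, y) := by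
  have : ∀ t, probOf p (fun ω => (X ω, Y ω)) (t, y)
      = ∑ ω ∈ (Finset.univ.filter (fun ω => Y ω = y)).filter (fun ω => X ω = t), p ω := by
    intro t
    unfold probOf
    rw [Finset.filter_filter]
    apply Finset.sum_congr _ (fun _ _ => rfl)
    apply Finset.filter_congr
    intro ω _
    simp [Prod.ext_iff, and_comm]
  simp_rw [this]
  rw [Finset.sum_fiberwise (Finset.univ.filter (fun ω => Y ω = y)) X p]
  rfl

-- pointwise Gibbs-type inequality
lemma gibbs_pointwise {q a b : ℝ} (hq : 0 ≤ q) (ha : q ≤ a) (hb : q ≤ b)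
    (ha0 : 0 ≤ a) (hb0 : 0 ≤ b) :
    q - a * b ≤ q * (Real.log q - Real.log a - Real.log b) := by
  rcases eq_or_lt_of_le hq with h0 | h0
  · simp [← h0]
    positivity
  · have hap : 0 < a := lt_of_lt_of_le h0 ha
    have hbp : 0 < b := lt_of_lt_of_le h0 hb
    have hx : 0 < a * b / q := by positivity
    have hlog := Real.log_le_sub_one_of_pos hx
    rw [Real.log_div (by positivity) (ne_of_gt h0), Real.log_mul (ne_of_gt hap) (ne_of_gt hbp)]
      at hlog
    have := mul_le_mul_of_nonneg_left hlog hq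
    have hq' : q * (a * b / q) = a * b := by field_simp
    nlinarith [this]

lemma entropy_pair_le (p : Ω → ℝ) (hp : ∀ ω, 0 ≤ p ω) (hp1 : ∑ ω : Ω, p ω = 1)
    (X : Ω → α) (Y : Ω → β) :
    entropy p (fun ω => (X ω, Y ω)) ≤ entropy p X + entropy p Y := by
  set q : α × β → ℝ := probOf p (fun ω => (X ω, Y ω)) with hqdef
  have hq0 : ∀ z, 0 ≤ q z := fun z => probOf_nonneg p hp _ z
  have hq1 : ∑ z : α × β, q z = 1 := by rw [hqdef, sum_probOf]; exact hp1
  set A : α → ℝ := probOf p X with hAdef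
  set B : β → ℝ := probOf p Y with hBdef
  have hA : ∀ t, A t = ∑ y : β, q (t, y) := fun t => probOf_fst p X Y t
  have hB : ∀ y, B y = ∑ t : α, q (t, y) := fun y => probOf_snd p X Y y
  have hA0 : ∀ t, 0 ≤ A t := fun t => probOf_nonneg p hp _ t
  have hB0 : ∀ y, 0 ≤ B y := fun y => probOf_nonneg p hp _ y
  have hA1 : ∑ t, A t = 1 := by rw [hAdef, sum_probOf]; exact hp1
  have hB1 : ∑ y, B y = 1 := by rw [hBdef, sum_probOf]; exact hp1
  have hqA : ∀ t y, q (t, y) ≤ A t := by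
    intro t y
    rw [hA t]
    exact Finset.single_le_sum (f := fun y => q (t, y)) (fun i _ => hq0 _) (Finset.mem_univ y)
  have hqB : ∀ t y, q (t, y) ≤ B y := by
    intro t y
    rw [hB y]
    exact Finset.single_le_sum (f := fun t => q (t, y)) (fun i _ => hq0 _) (Finset.mem_univ t)
  have key : ∀ t y, q (t, y) - A t * B y
      ≤ q (t, y) * (Real.log (q (t, y)) - Real.log (A t) - Real.log (B y)) :=
    fun t y => gibbs_pointwise (hq0 _) (hqA t y) (hqB t y) (hA0 t) (hB0 y)
  have expand : entropy p X + entropy p Y - entropy p (fun ω => (X ω, Y ω))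
      = ∑ z : α × β, q z * (Real.log (q z) - Real.log (A z.1) - Real.log (B z.2)) := by
    unfold entropy
    rw [← hqdef, ← hAdef, ← hBdef]
    rw [Fintype.sum_prod_type (f := fun z : α × β => q z * (Real.log (q z) - Real.log (A z.1) - Real.log (B z.2)))]
    have e1 : ∑ t, Real.negMulLog (A t) = ∑ t, ∑ y, (- (q (t,y) * Real.log (A t))) := by
      apply Finset.sum_congr rfl
      intro t _
      rw [Real.negMulLog, neg_mul, hA t, Finset.sum_mul, ← Finset.sum_neg_distrib]
    have e2 : ∑ y, Real.negMulLog (B y) = ∑ y, ∑ t, (- (q (t,y) * Real.log (B y))) := by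
      apply Finset.sum_congr rfl
      intro y _
      rw [Real.negMulLog, neg_mul, hB y, Finset.sum_mul, ← Finset.sum_neg_distrib]
    have e3 : ∑ z : α × β, Real.negMulLog (q z)
        = ∑ t, ∑ y, (- (q (t, y) * Real.log (q (t, y)))) := by
      rw [Fintype.sum_prod_type]
      simp [Real.negMulLog, neg_mul]
    rw [e1, e2, e3, Finset.sum_comm (f := fun y t => (- (q (t,y) * Real.log (B y))))]
    rw [← Finset.sum_add_distrib, ← Finset.sum_sub_distrib]
    apply Finset.sum_congr rfl
    intro t _
    rw [← Finset.sum_add_distrib, ← Finset.sum_sub_distrib]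
    apply Finset.sum_congr rfl
    intro y _
    ring
  have total : ∑ z : α × β, (q z - A z.1 * B z.2) = 0 := by
    rw [Finset.sum_sub_distrib, hq1, Fintype.sum_prod_type (f := fun z : α × β => A z.1 * B z.2)]
    simp_rw [← Finset.sum_mul_sum]
    rw [hA1, hB1]
    norm_num
  have : (0:ℝ) ≤ entropy p X + entropy p Y - entropy p (fun ω => (X ω, Y ω)) := by
    rw [expand, ← total]
    exact Finset.sum_le_sum (fun z _ => key z.1 z.2)
  linarith


lemma probOf_eq_zero_of_not_mem (p : Ω → ℝ) (X : Ω → α) (a : α)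
    (h : ∀ ω, X ω ≠ a) : probOf p X a = 0 := by
  unfold probOf
  rw [Finset.filter_false_of_mem (fun ω _ => h ω), Finset.sum_empty]

lemma entropy_congr (p : Ω → ℝ) (X : Ω → α) (Y : Ω → β)
    (h : ∀ ω ω', X ω = X ω' ↔ Y ω = Y ω') :
    entropy p X = entropy p Y := by
  classical
  cases isEmpty_or_nonempty Ω with
  | inl hΩ =>
    unfold entropy
    rw [Finset.sum_eq_zero, Finset.sum_eq_zero] <;>
      (intro a _; rw [probOf_eq_zero_of_not_mem] <;> simp [IsEmpty.forall_iff])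
  | inr hΩ =>
    have key : ∀ (ω₀ : Ω), probOf p X (X ω₀) = probOf p Y (Y ω₀) := by
      intro ω₀
      unfold probOf
      apply Finset.sum_congr _ (fun _ _ => rfl)
      ext ω
      simp [h ω ω₀]
    -- reduce to achieved values
    have hX : entropy p X
        = ∑ a ∈ Finset.univ.filter (fun a => ∃ ω, X ω = a), Real.negMulLog (probOf p X a) := by
      refine (Finset.sum_filter_of_ne ?_).symm
      intro a _ hne
      by_contra hcon
      push_neg at hcon
      exact hne (by rw [probOf_eq_zero_of_not_mem p X a hcon, Real.negMulLog_zero])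
    have hY : entropy p Y
        = ∑ b ∈ Finset.univ.filter (fun b => ∃ ω, Y ω = b), Real.negMulLog (probOf p Y b) := by
      refine (Finset.sum_filter_of_ne ?_).symm
      intro b _ hne
      by_contra hcon
      push_neg at hcon
      exact hne (by rw [probOf_eq_zero_of_not_mem p Y b hcon, Real.negMulLog_zero])
    rw [hX, hY]
    refine Finset.sum_nbij'
      (i := fun a => Y (if h : ∃ ω, X ω = a then h.choose else Classical.arbitrary Ω))
      (j := fun b => X (if h : ∃ ω, Y ω = b then h.choose else Classical.arbitrary Ω))
      ?_ ?_ ?_ ?_ ?_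
    · intro a ha
      simp only [Finset.mem_filter, Finset.mem_univ, true_and] at ha ⊢
      exact ⟨_, rfl⟩
    · intro b hb
      simp only [Finset.mem_filter, Finset.mem_univ, true_and] at hb ⊢
      exact ⟨_, rfl⟩
    · intro a ha
      simp only [Finset.mem_filter, Finset.mem_univ, true_and] at ha
      beta_reduce
      rw [dif_pos ha]
      have h2 : ∃ ω, Y ω = Y ha.choose := ⟨_, rfl⟩
      rw [dif_pos h2]
      exact ((h _ _).mpr h2.choose_spec).trans ha.choose_spec
    · intro b hb
      simp only [Finset.mem_filter, Finset.mem_univ, true_and] at hb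
      beta_reduce
      rw [dif_pos hb]
      have h2 : ∃ ω, X ω = X hb.choose := ⟨_, rfl⟩
      rw [dif_pos h2]
      exact ((h _ _).mp h2.choose_spec).trans hb.choose_spec
    · intro a ha
      simp only [Finset.mem_filter, Finset.mem_univ, true_and] at ha
      beta_reduce
      rw [dif_pos ha]
      congr 1
      conv_lhs => rw [← ha.choose_spec]
      exact key _
end AuxBasic

lemma negMulLog_prod {ι : Type*} [DecidableEq ι] (s : Finset ι) (x : ι → ℝ) :
    Real.negMulLog (∏ i ∈ s, x i)
      = ∑ i ∈ s, (∏ j ∈ s.erase i, x j) * Real.negMulLog (x i) := by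
  induction s using Finset.induction with
  | empty => simp
  | insert _ _ ha ih =>
    rename_i a s
    rw [Finset.prod_insert ha, Real.negMulLog_mul, Finset.sum_insert ha,
      Finset.erase_insert ha, ih, Finset.mul_sum]
    congr 1
    apply Finset.sum_congr rfl
    intro i hi
    have hia : i ≠ a := fun h => ha (h ▸ hi)
    rw [Finset.erase_insert_of_ne hia.symm,
      Finset.prod_insert (fun h => ha (Finset.mem_of_mem_erase h))]
    ring

lemma sum_filter_pi {ι : Type*} [Fintype ι] [DecidableEq ι] {κ : ι → Type*}
    [∀ i, Fintype (κ i)] [∀ i, DecidableEq (κ i)]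
    (P : ∀ i, κ i → Prop) [∀ i a, Decidable (P i a)] (f : ∀ i, κ i → ℝ) :
    ∑ x ∈ Finset.univ.filter (fun x : ∀ i, κ i => ∀ i, P i (x i)), ∏ i, f i (x i)
      = ∏ i, ∑ j ∈ Finset.univ.filter (P i), f i j := by
  rw [Finset.prod_univ_sum]
  apply Finset.sum_congr _ (fun _ _ => rfl)
  ext x
  simp [Fintype.mem_piFinset]

lemma probOf_pi_comp {Ω ι : Type*} [Fintype Ω] [Fintype ι] [DecidableEq ι]
    {κ : ι → Type*} [∀ i, Fintype (κ i)] [∀ i, DecidableEq (κ i)]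
    {γ : ι → Type*} [∀ i, Fintype (γ i)] [∀ i, DecidableEq (γ i)]
    (p : Ω → ℝ) (Z : ∀ i, Ω → κ i) (g : ∀ i, κ i → γ i)
    (hfact : ∀ x : ∀ i, κ i, probOf p (fun ω i => Z i ω) x = ∏ i, probOf p (Z i) (x i))
    (y : ∀ i, γ i) :
    probOf p (fun ω i => g i (Z i ω)) y = ∏ i, probOf p (fun ω => g i (Z i ω)) (y i) := by
  have h1 : probOf p (fun ω i => g i (Z i ω)) y
      = probOf p (fun ω => (fun x i => g i (x i)) ((fun ω' i => Z i ω') ω)) y := rfl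
  rw [h1, probOf_comp p (fun ω i => Z i ω) (fun x i => g i (x i)) y]
  have h2 : ∀ x : ∀ i, κ i, ((fun i => g i (x i)) = y) ↔ (∀ i, g i (x i) = y i) := by
    intro x; exact funext_iff
  rw [Finset.filter_congr (fun x _ => by rw [h2 x])]
  simp_rw [hfact]
  rw [sum_filter_pi (fun i a => g i a = y i) (fun i => probOf p (Z i))]
  apply Finset.prod_congr rfl
  intro i _
  rw [probOf_comp p (Z i) (g i) (y i)]

lemma entropy_pi_comp {Ω ι : Type*} [Fintype Ω] [Fintype ι] [DecidableEq ι]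
    {κ : ι → Type*} [∀ i, Fintype (κ i)] [∀ i, DecidableEq (κ i)]
    (p : Ω → ℝ) (hp1 : ∑ ω : Ω, p ω = 1)
    (W : ∀ i, Ω → κ i)
    (hfact : ∀ x : ∀ i, κ i, probOf p (fun ω i => W i ω) x = ∏ i, probOf p (W i) (x i)) :
    entropy p (fun ω i => W i ω) = ∑ i, entropy p (W i) := by
  set r : ∀ i, κ i → ℝ := fun i => probOf p (W i) with hr
  have hr1 : ∀ i, ∑ a, r i a = 1 := fun i => by rw [hr]; rw [sum_probOf]; exact hp1
  unfold entropy
  calc ∑ x : ∀ i, κ i, Real.negMulLog (probOf p (fun ω i => W i ω) x)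
      = ∑ x : ∀ i, κ i, ∑ i, (∏ j ∈ Finset.univ.erase i, r j (x j)) * Real.negMulLog (r i (x i)) := by
        apply Finset.sum_congr rfl
        intro x _
        rw [hfact x, negMulLog_prod]
    _ = ∑ i, ∑ x : ∀ i, κ i, ∏ j, (fun j a => if h : j = i then Real.negMulLog (r j a) else r j a) j (x j) := by
        rw [Finset.sum_comm]
        apply Finset.sum_congr rfl; intro i _
        apply Finset.sum_congr rfl; intro x _
        rw [← Finset.mul_prod_erase Finset.univ _ (Finset.mem_univ i)]
        beta_reduce
        rw [dif_pos rfl, mul_comm]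
        congr 1
        apply Finset.prod_congr rfl
        intro j hj
        rw [dif_neg (Finset.ne_of_mem_erase hj)]
    _ = ∑ i, ∏ j, ∑ a, (fun j a => if h : j = i then Real.negMulLog (r j a) else r j a) j a := by
        apply Finset.sum_congr rfl; intro i _
        rw [Fintype.prod_sum]
    _ = ∑ i, ∑ a, Real.negMulLog (r i a) := by
        apply Finset.sum_congr rfl; intro i _
        rw [← Finset.mul_prod_erase Finset.univ _ (Finset.mem_univ i)]
        have h1 : ∑ a, (fun (j : ι) a => if h : j = i then Real.negMulLog (r j a) else r j a) i a
            = ∑ a, Real.negMulLog (r i a) := by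
          apply Finset.sum_congr rfl; intro a _; beta_reduce; rw [dif_pos rfl]
        rw [h1]
        have h2 : ∏ j ∈ Finset.univ.erase i,
            (∑ a, (fun (j : ι) a => if h : j = i then Real.negMulLog (r j a) else r j a) j a) = 1 := by
          apply Finset.prod_eq_one
          intro j hj
          have : ∑ a, (fun (j : ι) a => if h : j = i then Real.negMulLog (r j a) else r j a) j a
              = ∑ a, r j a := by
            apply Finset.sum_congr rfl; intro a _; beta_reduce
            rw [dif_neg (Finset.ne_of_mem_erase hj)]
          rw [this, hr1 j]
        rw [h2, mul_one]

/-- In a connected graph, for a proper set `B` containing `r` there is an edge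
crossing `B` whose endpoint closer to `r` is inside `B`. -/
lemma exists_cross_edge {G : SimpleGraph (Fin m)} (hconn : G.Connected)
    (r : Fin m) (B : Finset (Fin m)) (hrB : r ∈ B) (hBne : B ≠ Finset.univ) :
    ∃ w x : Fin m, w ∈ B ∧ x ∉ B ∧ G.Adj w x ∧ G.dist r w < G.dist r x := by
  have hBc : ∃ x, x ∉ B := by
    by_contra hc
    push_neg at hc
    exact hBne (Finset.eq_univ_iff_forall.mpr hc)
  obtain ⟨x0, hx0⟩ := hBc
  obtain ⟨x, hxc, hxmin⟩ := Finset.exists_min_image Bᶜ (G.dist r)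
    ⟨x0, Finset.mem_compl.mpr hx0⟩
  rw [Finset.mem_compl] at hxc
  have hxr : x ≠ r := fun h => hxc (h ▸ hrB)
  have hd0 : 0 < G.dist r x := hconn.pos_dist_of_ne (Ne.symm hxr)
  obtain ⟨p, hp⟩ := hconn.exists_walk_length_eq_dist r x
  obtain ⟨w, hadj, q', hlen⟩ :
      ∃ w, G.Adj x w ∧ ∃ q' : G.Walk w r, q'.length + 1 = p.length := by
    have hrl : p.reverse.length = p.length := SimpleGraph.Walk.length_reverse p
    rcases hq : p.reverse with _ | ⟨hadj, q'⟩
    · exfalso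
      rw [hq] at hrl
      simp only [SimpleGraph.Walk.length_nil] at hrl
      rw [hp] at hrl
      omega
    · rw [hq] at hrl
      exact ⟨_, hadj, q', by rw [← hrl]; rfl⟩
  have hw1 : G.dist r w ≤ q'.length := by
    have := SimpleGraph.dist_le q'.reverse
    rwa [SimpleGraph.Walk.length_reverse] at this
  have hwx : G.dist r w < G.dist r x := by omega
  have hwB : w ∈ B := by
    by_contra hwB
    exact absurd (hxmin w (Finset.mem_compl.mpr hwB)) (by omega)
  exact ⟨w, x, hwB, hxc, hadj.symm, hwx⟩

section Graph2
variable {m : ℕ} {ε : Type*} (tl hd : ε → Fin m)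

lemma graphOf_adj_of_edge (e : ε) (hloop : tl e ≠ hd e) :
    (graphOf tl hd).Adj (tl e) (hd e) := by
  rw [graphOf, SimpleGraph.fromRel_adj]
  exact ⟨hloop, Or.inl ⟨e, rfl, rfl⟩⟩

lemma graphOf_adj_elim {u v : Fin m} (h : (graphOf tl hd).Adj u v) :
    ∃ e, (tl e = u ∧ hd e = v) ∨ (tl e = v ∧ hd e = u) := by
  rw [graphOf, SimpleGraph.fromRel_adj] at h
  rcases h.2 with ⟨e, h1, h2⟩ | ⟨e, h1, h2⟩
  · exact ⟨e, Or.inl ⟨h1, h2⟩⟩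
  · exact ⟨e, Or.inr ⟨h1, h2⟩⟩

lemma bridge_not_reachable (htree : (graphOf tl hd).IsTree) (hloop : ∀ e, tl e ≠ hd e)
    (e₀ : ε) :
    ¬ ((graphOf tl hd) \ SimpleGraph.fromEdgeSet {s(tl e₀, hd e₀)}).Reachable (tl e₀) (hd e₀) := by
  have hadj := graphOf_adj_of_edge tl hd e₀ (hloop e₀)
  have hbr := SimpleGraph.isAcyclic_iff_forall_edge_isBridge.mp htree.2
    (((graphOf tl hd).mem_edgeSet).mpr hadj)
  exact SimpleGraph.isBridge_iff.mp hbr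

lemma other_edge_adj (hloop : ∀ e, tl e ≠ hd e)
    (hinj : Function.Injective (fun e => s(tl e, hd e))) (e₀ e : ε) (hne : e ≠ e₀) :
    ((graphOf tl hd) \ SimpleGraph.fromEdgeSet {s(tl e₀, hd e₀)}).Adj (tl e) (hd e) := by
  rw [SimpleGraph.sdiff_adj]
  refine ⟨graphOf_adj_of_edge tl hd e (hloop e), ?_⟩
  rw [SimpleGraph.fromEdgeSet_adj]
  rintro ⟨hmem, -⟩
  rw [Set.mem_singleton_iff] at hmem
  exact hne (hinj hmem)
end Graph2

-- === termTuple lemmas ===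
section Tree
variable {Ω : Type*} [Fintype Ω] {m : ℕ} {ε : Type*} [Fintype ε] [DecidableEq ε]
    (tl hd : ε → Fin m)
    {Tt Yt : ε → Type*} [∀ e, Fintype (Tt e)] [∀ e, DecidableEq (Tt e)]
    [∀ e, Fintype (Yt e)] [∀ e, DecidableEq (Yt e)]
    (p : Ω → ℝ) (Te : ∀ e, Ω → Tt e) (Ye : ∀ e, Ω → Yt e)

lemma termTuple_eq_iff (C : Finset (Fin m)) (ω ω' : Ω) :
    termTuple tl hd Te Ye C ω = termTuple tl hd Te Ye C ω'
      ↔ (∀ e, (tl e ∈ C → Te e ω = Te e ω') ∧ (hd e ∈ C → Ye e ω = Ye e ω')) := by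
  constructor
  · intro h e
    constructor
    · intro htl
      have h1 := congrFun h ⟨tl e, htl⟩
      exact congrFun (congrArg Prod.fst h1) ⟨e, rfl⟩
    · intro hhd
      have h1 := congrFun h ⟨hd e, hhd⟩
      exact congrFun (congrArg Prod.snd h1) ⟨e, rfl⟩
  · intro h
    funext k
    refine Prod.ext ?_ ?_
    · funext e'
      exact (h e'.1).1 (by rw [e'.2]; exact k.2)
    · funext e'
      exact (h e'.1).2 (by rw [e'.2]; exact k.2)

lemma entropy_termTuple (hp1 : ∑ ω : Ω, p ω = 1)
    (hindep : IndepEdgePairs p Te Ye) (C : Finset (Fin m)) :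
    entropy p (termTuple tl hd Te Ye C)
      = ∑ e, (if tl e ∈ C then (if hd e ∈ C then entropy p (fun ω => (Te e ω, Ye e ω))
              else entropy p (Te e))
            else (if hd e ∈ C then entropy p (Ye e) else 0)) := by
  classical
  set g : ∀ e, Tt e × Yt e → Option (Tt e) × Option (Yt e) :=
    fun e z => (if tl e ∈ C then some z.1 else none,
                if hd e ∈ C then some z.2 else none) with hg
  have hview : entropy p (termTuple tl hd Te Ye C)
      = entropy p (fun ω e => g e (Te e ω, Ye e ω)) := by
    apply entropy_congr
    intro ω ω'
    rw [termTuple_eq_iff, funext_iff]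
    constructor
    · intro h e
      simp only [hg, Prod.mk.injEq]
      constructor
      · by_cases htl : tl e ∈ C
        · simp only [if_pos htl, Option.some.injEq]
          exact (h e).1 htl
        · simp [if_neg htl]
      · by_cases hhd : hd e ∈ C
        · simp only [if_pos hhd, Option.some.injEq]
          exact (h e).2 hhd
        · simp [if_neg hhd]
    · intro h e
      have he := h e
      simp only [hg, Prod.mk.injEq] at he
      constructor
      · intro htl
        have h1 := he.1
        simp only [if_pos htl] at h1
        exact Option.some.inj h1
      · intro hhd
        have h2 := he.2
        simp only [if_pos hhd] at h2
        exact Option.some.inj h2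
  rw [hview]
  rw [entropy_pi_comp p hp1 (fun e ω => g e (Te e ω, Ye e ω))
    (fun x => probOf_pi_comp p (fun e ω => (Te e ω, Ye e ω)) g hindep x)]
  apply Finset.sum_congr rfl
  intro e _
  by_cases htl : tl e ∈ C <;> by_cases hhd : hd e ∈ C
  · rw [if_pos htl, if_pos hhd]
    apply entropy_congr
    intro ω ω'
    simp [hg, if_pos htl, if_pos hhd, Prod.ext_iff]
  · rw [if_pos htl, if_neg hhd]
    apply entropy_congr
    intro ω ω'
    simp [hg, if_pos htl, if_neg hhd, Prod.ext_iff]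
  · rw [if_neg htl, if_pos hhd]
    apply entropy_congr
    intro ω ω'
    simp [hg, if_neg htl, if_pos hhd, Prod.ext_iff]
  · rw [if_neg htl, if_neg hhd]
    have hconst : (fun ω => g e (Te e ω, Ye e ω))
        = fun _ => ((none, none) : Option (Tt e) × Option (Yt e)) := by
      funext ω
      simp [hg, if_neg htl, if_neg hhd]
    rw [hconst]
    exact entropy_const p hp1 _

lemma condEntropy_termTuple (hp1 : ∑ ω : Ω, p ω = 1)
    (hindep : IndepEdgePairs p Te Ye) (B : Finset (Fin m)) :
    condEntropy p (termTuple tl hd Te Ye B) (termTuple tl hd Te Ye Bᶜ)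
      = ∑ e, (entropy p (fun ω => (Te e ω, Ye e ω))
          - (if tl e ∈ Bᶜ then (if hd e ∈ Bᶜ then entropy p (fun ω => (Te e ω, Ye e ω))
                else entropy p (Te e))
             else (if hd e ∈ Bᶜ then entropy p (Ye e) else 0))) := by
  unfold condEntropy
  rw [Finset.sum_sub_distrib, entropy_termTuple tl hd p Te Ye hp1 hindep Bᶜ]
  congr 1
  refine (entropy_congr p _ (fun ω e => (Te e ω, Ye e ω)) ?_).trans
    (entropy_pi_comp p hp1 (fun e ω => (Te e ω, Ye e ω)) hindep)
  intro ω ω'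
  rw [Prod.ext_iff, termTuple_eq_iff, termTuple_eq_iff, funext_iff]
  constructor
  · rintro ⟨hB, hBc⟩ e
    refine Prod.ext ?_ ?_
    · by_cases htl : tl e ∈ B
      · exact (hB e).1 htl
      · exact (hBc e).1 (Finset.mem_compl.mpr htl)
    · by_cases hhd : hd e ∈ B
      · exact (hB e).2 hhd
      · exact (hBc e).2 (Finset.mem_compl.mpr hhd)
  · intro h
    have hT : ∀ e, Te e ω = Te e ω' := fun e => congrArg Prod.fst (h e)
    have hY : ∀ e, Ye e ω = Ye e ω' := fun e => congrArg Prod.snd (h e)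
    exact ⟨fun e => ⟨fun _ => hT e, fun _ => hY e⟩, fun e => ⟨fun _ => hT e, fun _ => hY e⟩⟩

lemma entropy_termFull (hp1 : ∑ ω : Ω, p ω = 1)
    (hindep : IndepEdgePairs p Te Ye) :
    entropy p (fun ω (k : Fin m) => termRV tl hd Te Ye k ω)
      = ∑ e, entropy p (fun ω => (Te e ω, Ye e ω)) := by
  classical
  have h1 : entropy p (fun ω (k : Fin m) => termRV tl hd Te Ye k ω)
      = entropy p (fun ω e => (Te e ω, Ye e ω)) := by
    apply entropy_congr
    intro ω ω'
    rw [funext_iff, funext_iff]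
    constructor
    · intro h e
      refine Prod.ext ?_ ?_
      · exact congrFun (congrArg Prod.fst (h (tl e))) ⟨e, rfl⟩
      · exact congrFun (congrArg Prod.snd (h (hd e))) ⟨e, rfl⟩
    · intro h k
      refine Prod.ext ?_ ?_
      · funext e'
        exact congrArg Prod.fst (h e'.1)
      · funext e'
        exact congrArg Prod.snd (h e'.1)
  rw [h1]
  exact entropy_pi_comp p hp1 (fun e ω => (Te e ω, Ye e ω)) hindep
end Tree

theorem treePIN_CN_expression_eq_min_edge_mutualInfo
    {Ω : Type*} [Fintype Ω] {m : ℕ} {ε : Type*} [Fintype ε] [DecidableEq ε]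
    [Nonempty ε]
    (tl hd : ε → Fin m)
    {Tt Yt : ε → Type*} [∀ e, Fintype (Tt e)] [∀ e, DecidableEq (Tt e)]
    [∀ e, Fintype (Yt e)] [∀ e, DecidableEq (Yt e)]
    (p : Ω → ℝ) (hp : ∀ ω, 0 ≤ p ω) (hp1 : ∑ ω : Ω, p ω = 1)
    (Te : ∀ e, Ω → Tt e) (Ye : ∀ e, Ω → Yt e)
    (hm : 2 ≤ m)
    -- the underlying undirected graph is a tree with edge set `ε`
    (htree : (graphOf tl hd).IsTree)
    (hloop : ∀ e, tl e ≠ hd e)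
    (hinj : Function.Injective (fun e => s(tl e, hd e)))
    -- the edge pairs are mutually independent across edges
    (hindep : IndepEdgePairs p Te Ye) :
    -- `min_{λ ∈ Λ([m])} (H(X_[m]) − Σ_{B ∈ Γ([m])} λ_B H(X_B|X_{B^c}))
    --   = min_{e ∈ E} I(T_e ; Y_e)` (and the minimum over `λ` is attained)
    IsLeast {x : ℝ | ∃ lam : Finset (Fin m) → ℝ, memLambda m Finset.univ lam ∧
        x = entropy p (fun ω (k : Fin m) => termRV tl hd Te Ye k ω)
          - ∑ B ∈ Gamma m Finset.univ,
              lam B * condEntropy p (termTuple tl hd Te Ye B) (termTuple tl hd Te Ye Bᶜ)}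
      (⨅ e : ε, mutualInfo p (Te e) (Ye e)) := by
  -- basic facts about Γ
  have hGam : ∀ B : Finset (Fin m), B ∈ Gamma m Finset.univ ↔ B.Nonempty ∧ B ≠ Finset.univ := by
    intro B
    rw [Gamma, Finset.mem_filter]
    constructor
    · rintro ⟨-, h1, h2, -⟩; exact ⟨h1, h2⟩
    · rintro ⟨h1, h2⟩
      exact ⟨Finset.mem_univ _, h1, h2, fun hs => h2 (Finset.univ_subset_iff.mp hs)⟩
  -- splitting sums over Γ at an edge
  have hsplit : ∀ (lam : Finset (Fin m) → ℝ), memLambda m Finset.univ lam → ∀ e : ε,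
      (∑ B ∈ (Gamma m Finset.univ).filter (fun B => tl e ∈ B ∧ hd e ∉ B), lam B
        = 1 - ∑ B ∈ (Gamma m Finset.univ).filter (fun B => tl e ∈ B ∧ hd e ∈ B), lam B)
      ∧ (∑ B ∈ (Gamma m Finset.univ).filter (fun B => tl e ∉ B ∧ hd e ∈ B), lam B
        = 1 - ∑ B ∈ (Gamma m Finset.univ).filter (fun B => tl e ∈ B ∧ hd e ∈ B), lam B) := by
    intro lam hlam e
    constructor
    · have key := Finset.sum_filter_add_sum_filter_not
        ((Gamma m Finset.univ).filter (fun B => tl e ∈ B)) (fun B => hd e ∈ B) lam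
      rw [Finset.filter_filter, Finset.filter_filter, hlam.2 (tl e)] at key
      linarith
    · have key := Finset.sum_filter_add_sum_filter_not
        ((Gamma m Finset.univ).filter (fun B => hd e ∈ B)) (fun B => tl e ∈ B) lam
      rw [Finset.filter_filter, Finset.filter_filter, hlam.2 (hd e)] at key
      have e1 : (Gamma m Finset.univ).filter (fun B => hd e ∈ B ∧ tl e ∈ B)
          = (Gamma m Finset.univ).filter (fun B => tl e ∈ B ∧ hd e ∈ B) :=
        Finset.filter_congr (fun B _ => and_comm)
      have e2 : (Gamma m Finset.univ).filter (fun B => hd e ∈ B ∧ ¬ tl e ∈ B)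
          = (Gamma m Finset.univ).filter (fun B => tl e ∉ B ∧ hd e ∈ B) :=
        Finset.filter_congr (fun B _ => and_comm)
      rw [e1, e2] at key
      linarith
  -- nonnegativity of the weights
  have hwnn : ∀ (lam : Finset (Fin m) → ℝ), memLambda m Finset.univ lam → ∀ e : ε,
      0 ≤ 1 - ∑ B ∈ (Gamma m Finset.univ).filter (fun B => tl e ∈ B ∧ hd e ∈ B), lam B := by
    intro lam hlam e
    rw [← (hsplit lam hlam e).1]
    apply Finset.sum_nonneg
    intro B hB
    exact (hlam.1 B (Finset.mem_of_mem_filter B hB)).1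
  -- the central value formula
  have hval : ∀ lam : Finset (Fin m) → ℝ, memLambda m Finset.univ lam →
      entropy p (fun ω (k : Fin m) => termRV tl hd Te Ye k ω)
        - ∑ B ∈ Gamma m Finset.univ,
            lam B * condEntropy p (termTuple tl hd Te Ye B) (termTuple tl hd Te Ye Bᶜ)
      = ∑ e, (1 - ∑ B ∈ (Gamma m Finset.univ).filter (fun B => tl e ∈ B ∧ hd e ∈ B), lam B)
          * mutualInfo p (Te e) (Ye e) := by
    intro lam hlam
    rw [entropy_termFull tl hd p Te Ye hp1 hindep]
    have hc : ∀ B ∈ Gamma m Finset.univ,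
        lam B * condEntropy p (termTuple tl hd Te Ye B) (termTuple tl hd Te Ye Bᶜ)
        = ∑ e, lam B * (entropy p (fun ω => (Te e ω, Ye e ω))
          - (if tl e ∈ Bᶜ then (if hd e ∈ Bᶜ then entropy p (fun ω => (Te e ω, Ye e ω))
                else entropy p (Te e))
             else (if hd e ∈ Bᶜ then entropy p (Ye e) else 0))) := by
      intro B _
      rw [condEntropy_termTuple tl hd p Te Ye hp1 hindep B, Finset.mul_sum]
    rw [Finset.sum_congr rfl hc, Finset.sum_comm, ← Finset.sum_sub_distrib]
    apply Finset.sum_congr rfl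
    intro e _
    -- split the inner sum over Γ into four parts
    rw [← Finset.sum_filter_add_sum_filter_not (Gamma m Finset.univ) (fun B => tl e ∈ B)]
    rw [← Finset.sum_filter_add_sum_filter_not
      ((Gamma m Finset.univ).filter (fun B => tl e ∈ B)) (fun B => hd e ∈ B)]
    rw [← Finset.sum_filter_add_sum_filter_not
      ((Gamma m Finset.univ).filter (fun B => ¬ tl e ∈ B)) (fun B => hd e ∈ B)]
    rw [Finset.filter_filter, Finset.filter_filter, Finset.filter_filter, Finset.filter_filter]
    have c1 : ∀ B ∈ (Gamma m Finset.univ).filter (fun B => tl e ∈ B ∧ hd e ∈ B),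
        lam B * (entropy p (fun ω => (Te e ω, Ye e ω))
          - (if tl e ∈ Bᶜ then (if hd e ∈ Bᶜ then entropy p (fun ω => (Te e ω, Ye e ω))
                else entropy p (Te e))
             else (if hd e ∈ Bᶜ then entropy p (Ye e) else 0)))
        = lam B * entropy p (fun ω => (Te e ω, Ye e ω)) := by
      intro B hB
      rw [Finset.mem_filter] at hB
      rw [if_neg (by simp [Finset.mem_compl, hB.2.1]),
          if_neg (by simp [Finset.mem_compl, hB.2.2]), sub_zero]
    have c2 : ∀ B ∈ (Gamma m Finset.univ).filter (fun B => tl e ∈ B ∧ ¬ hd e ∈ B),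
        lam B * (entropy p (fun ω => (Te e ω, Ye e ω))
          - (if tl e ∈ Bᶜ then (if hd e ∈ Bᶜ then entropy p (fun ω => (Te e ω, Ye e ω))
                else entropy p (Te e))
             else (if hd e ∈ Bᶜ then entropy p (Ye e) else 0)))
        = lam B * (entropy p (fun ω => (Te e ω, Ye e ω)) - entropy p (Ye e)) := by
      intro B hB
      rw [Finset.mem_filter] at hB
      rw [if_neg (by simp [Finset.mem_compl, hB.2.1]),
          if_pos (by simp [Finset.mem_compl, hB.2.2])]
    have c3 : ∀ B ∈ (Gamma m Finset.univ).filter (fun B => ¬ tl e ∈ B ∧ hd e ∈ B),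
        lam B * (entropy p (fun ω => (Te e ω, Ye e ω))
          - (if tl e ∈ Bᶜ then (if hd e ∈ Bᶜ then entropy p (fun ω => (Te e ω, Ye e ω))
                else entropy p (Te e))
             else (if hd e ∈ Bᶜ then entropy p (Ye e) else 0)))
        = lam B * (entropy p (fun ω => (Te e ω, Ye e ω)) - entropy p (Te e)) := by
      intro B hB
      rw [Finset.mem_filter] at hB
      rw [if_pos (by simp [Finset.mem_compl, hB.2.1]),
          if_neg (by simp [Finset.mem_compl, hB.2.2])]
    have c4 : ∀ B ∈ (Gamma m Finset.univ).filter (fun B => ¬ tl e ∈ B ∧ ¬ hd e ∈ B),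
        lam B * (entropy p (fun ω => (Te e ω, Ye e ω))
          - (if tl e ∈ Bᶜ then (if hd e ∈ Bᶜ then entropy p (fun ω => (Te e ω, Ye e ω))
                else entropy p (Te e))
             else (if hd e ∈ Bᶜ then entropy p (Ye e) else 0)))
        = 0 := by
      intro B hB
      rw [Finset.mem_filter] at hB
      rw [if_pos (by simp [Finset.mem_compl, hB.2.1]),
          if_pos (by simp [Finset.mem_compl, hB.2.2]), sub_self, mul_zero]
    rw [Finset.sum_congr rfl c1, Finset.sum_congr rfl c2, Finset.sum_congr rfl c3,
        Finset.sum_congr rfl c4, Finset.sum_const_zero, add_zero,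
        ← Finset.sum_mul, ← Finset.sum_mul, ← Finset.sum_mul]
    have hb := (hsplit lam hlam e).1
    have hcc := (hsplit lam hlam e).2
    have e2 : (Gamma m Finset.univ).filter (fun B => tl e ∈ B ∧ ¬ hd e ∈ B)
        = (Gamma m Finset.univ).filter (fun B => tl e ∈ B ∧ hd e ∉ B) := rfl
    have e3 : (Gamma m Finset.univ).filter (fun B => ¬ tl e ∈ B ∧ hd e ∈ B)
        = (Gamma m Finset.univ).filter (fun B => tl e ∉ B ∧ hd e ∈ B) := rfl
    rw [e2, e3, hb, hcc, mutualInfo]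
    ring
  -- nonnegativity of mutual information
  have hI0 : ∀ e : ε, 0 ≤ mutualInfo p (Te e) (Ye e) := by
    intro e
    have := entropy_pair_le p hp hp1 (Te e) (Ye e)
    rw [mutualInfo]; linarith
  have hbdd : BddBelow (Set.range fun e => mutualInfo p (Te e) (Ye e)) :=
    (Set.finite_range _).bddBelow
  have hM_le : ∀ e : ε, (⨅ e : ε, mutualInfo p (Te e) (Ye e)) ≤ mutualInfo p (Te e) (Ye e) :=
    fun e => ciInf_le hbdd e
  have hM0 : (0:ℝ) ≤ ⨅ e : ε, mutualInfo p (Te e) (Ye e) := le_ciInf hI0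
  -- the combinatorial bound : total weight at least one
  have hcomb : ∀ lam : Finset (Fin m) → ℝ, memLambda m Finset.univ lam →
      (1:ℝ) ≤ ∑ e, (1 - ∑ B ∈ (Gamma m Finset.univ).filter
          (fun B => tl e ∈ B ∧ hd e ∈ B), lam B) := by
    intro lam hlam
    have hr : 0 < m := by omega
    set r : Fin m := ⟨0, hr⟩ with hrdef
    set G := graphOf tl hd with hG
    have hnear : ∀ e : ε,
        1 - ∑ B ∈ (Gamma m Finset.univ).filter (fun B => tl e ∈ B ∧ hd e ∈ B), lam B
        = ∑ B ∈ (Gamma m Finset.univ).filter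
            (fun B => (if G.dist r (tl e) ≤ G.dist r (hd e) then tl e else hd e) ∈ B
                   ∧ (if G.dist r (tl e) ≤ G.dist r (hd e) then hd e else tl e) ∉ B), lam B := by
      intro e
      by_cases hle : G.dist r (tl e) ≤ G.dist r (hd e)
      · simp only [if_pos hle]
        exact ((hsplit lam hlam e).1).symm
      · simp only [if_neg hle]
        rw [Finset.filter_congr (fun B (_ : B ∈ Gamma m Finset.univ) =>
          (and_comm (a := hd e ∈ B) (b := tl e ∉ B)))]
        exact ((hsplit lam hlam e).2).symm
    rw [Finset.sum_congr rfl (fun e _ => hnear e)]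
    have hrw : ∀ e : ε, ∑ B ∈ (Gamma m Finset.univ).filter
            (fun B => (if G.dist r (tl e) ≤ G.dist r (hd e) then tl e else hd e) ∈ B
                   ∧ (if G.dist r (tl e) ≤ G.dist r (hd e) then hd e else tl e) ∉ B), lam B
        = ∑ B ∈ Gamma m Finset.univ,
            (if ((if G.dist r (tl e) ≤ G.dist r (hd e) then tl e else hd e) ∈ B
                   ∧ (if G.dist r (tl e) ≤ G.dist r (hd e) then hd e else tl e) ∉ B)
             then lam B else 0) := fun e => Finset.sum_filter _ _
    rw [Finset.sum_congr rfl (fun e _ => hrw e), Finset.sum_comm]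
    have hlast : ∑ B ∈ (Gamma m Finset.univ).filter (fun B => r ∈ B), lam B = 1 := hlam.2 r
    rw [← hlast, Finset.sum_filter]
    apply Finset.sum_le_sum
    intro B hB
    have hlamB : 0 ≤ lam B := (hlam.1 B hB).1
    by_cases hrB : r ∈ B
    · rw [if_pos hrB]
      obtain ⟨hBne, hBneuniv⟩ := (hGam B).mp hB
      obtain ⟨w, x, hwB, hxB, hadj, hdist⟩ :=
        exists_cross_edge htree.1 r B hrB hBneuniv
      obtain ⟨e, he⟩ := graphOf_adj_elim tl hd hadj
      have hcross : ((if G.dist r (tl e) ≤ G.dist r (hd e) then tl e else hd e) ∈ B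
          ∧ (if G.dist r (tl e) ≤ G.dist r (hd e) then hd e else tl e) ∉ B) := by
        rcases he with ⟨h1, h2⟩ | ⟨h1, h2⟩
        · rw [h1, h2]
          rw [if_pos (le_of_lt hdist), if_pos (le_of_lt hdist)]
          exact ⟨hwB, hxB⟩
        · rw [h1, h2]
          rw [if_neg (not_le.mpr hdist), if_neg (not_le.mpr hdist)]
          exact ⟨hwB, hxB⟩
      calc lam B = (if ((if G.dist r (tl e) ≤ G.dist r (hd e) then tl e else hd e) ∈ B
          ∧ (if G.dist r (tl e) ≤ G.dist r (hd e) then hd e else tl e) ∉ B)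
             then lam B else 0) := by rw [if_pos hcross]
        _ ≤ _ := Finset.single_le_sum
            (f := fun e => (if ((if G.dist r (tl e) ≤ G.dist r (hd e) then tl e else hd e) ∈ B
                ∧ (if G.dist r (tl e) ≤ G.dist r (hd e) then hd e else tl e) ∉ B)
               then lam B else 0))
            (fun e _ => by positivity) (Finset.mem_univ e)
    · rw [if_neg hrB]
      apply Finset.sum_nonneg
      intro e _
      positivity
  constructor
  · -- membership : the infimum is attained
    obtain ⟨estar, -, hminE⟩ := Finset.exists_min_image Finset.univ
      (fun e => mutualInfo p (Te e) (Ye e)) Finset.univ_nonempty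
    have hMI : (⨅ e : ε, mutualInfo p (Te e) (Ye e)) = mutualInfo p (Te estar) (Ye estar) :=
      le_antisymm (hM_le estar) (le_ciInf fun e => hminE e (Finset.mem_univ e))
    set G' := (graphOf tl hd) \ SimpleGraph.fromEdgeSet {s(tl estar, hd estar)} with hG'
    haveI : DecidablePred (fun v => G'.Reachable (tl estar) v) :=
      fun v => Classical.propDecidable _
    set S : Finset (Fin m) :=
      Finset.filter (fun v => G'.Reachable (tl estar) v) Finset.univ with hSdef
    have hSmem : ∀ v, v ∈ S ↔ G'.Reachable (tl estar) v := by
      intro v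
      rw [hSdef, Finset.mem_filter]
      simp
    have htlS : tl estar ∈ S := (hSmem _).mpr (SimpleGraph.Reachable.refl _)
    have hhdS : hd estar ∉ S := fun h =>
      bridge_not_reachable tl hd htree hloop estar ((hSmem _).mp h)
    have hsame : ∀ e, e ≠ estar → (tl e ∈ S ↔ hd e ∈ S) := by
      intro e hne
      have hadj := other_edge_adj tl hd hloop hinj estar e hne
      constructor
      · intro h; exact (hSmem _).mpr (((hSmem _).mp h).trans hadj.reachable)
      · intro h; exact (hSmem _).mpr (((hSmem _).mp h).trans hadj.symm.reachable)
    have hSG : S ∈ Gamma m Finset.univ := (hGam S).mpr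
      ⟨⟨tl estar, htlS⟩, fun h => hhdS (by rw [h]; exact Finset.mem_univ _)⟩
    have hScG : Sᶜ ∈ Gamma m Finset.univ := (hGam Sᶜ).mpr
      ⟨⟨hd estar, Finset.mem_compl.mpr hhdS⟩,
       fun h => (Finset.mem_compl.mp (by rw [h]; exact Finset.mem_univ (tl estar))) htlS⟩
    have hSne : S ≠ Sᶜ := fun h => (Finset.mem_compl.mp (h ▸ htlS)) htlS
    set lamstar : Finset (Fin m) → ℝ :=
      fun B => (if B = S then (1:ℝ) else 0) + (if B = Sᶜ then 1 else 0) with hlamstar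
    have hml : memLambda m Finset.univ lamstar := by
      constructor
      · intro B hB
        constructor
        · positivity
        · by_cases h1 : B = S
          · subst h1
            simp [hlamstar, hSne]
          · by_cases h2 : B = Sᶜ
            · subst h2
              simp [hlamstar, Ne.symm hSne]
            · simp [hlamstar, h1, h2]
      · intro j
        rw [hlamstar]
        rw [Finset.sum_add_distrib, Finset.sum_ite_eq' _ S (fun _ => (1:ℝ)),
          Finset.sum_ite_eq' _ Sᶜ (fun _ => (1:ℝ))]
        by_cases hj : j ∈ S
        · have hn : Sᶜ ∉ (Gamma m Finset.univ).filter (fun B => j ∈ B) := by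
            intro hc
            exact (Finset.mem_compl.mp (Finset.mem_filter.mp hc).2) hj
          have hyes : S ∈ (Gamma m Finset.univ).filter (fun B => j ∈ B) :=
            Finset.mem_filter.mpr ⟨hSG, hj⟩
          rw [if_pos hyes, if_neg hn]
          norm_num
        · have hn : S ∉ (Gamma m Finset.univ).filter (fun B => j ∈ B) := by
            intro hc
            exact hj (Finset.mem_filter.mp hc).2
          have hyes : Sᶜ ∈ (Gamma m Finset.univ).filter (fun B => j ∈ B) :=
            Finset.mem_filter.mpr ⟨hScG, Finset.mem_compl.mpr hj⟩
          rw [if_neg hn, if_pos hyes]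
          norm_num
    refine ⟨lamstar, hml, ?_⟩
    rw [hval lamstar hml]
    have haw : ∀ e : ε, ∑ B ∈ (Gamma m Finset.univ).filter
        (fun B => tl e ∈ B ∧ hd e ∈ B), lamstar B
        = (if e = estar then 0 else 1) := by
      intro e
      rw [hlamstar, Finset.sum_add_distrib, Finset.sum_ite_eq' _ S (fun _ => (1:ℝ)),
        Finset.sum_ite_eq' _ Sᶜ (fun _ => (1:ℝ))]
      by_cases he : e = estar
      · subst he
        have hn1 : S ∉ (Gamma m Finset.univ).filter
            (fun B => tl e ∈ B ∧ hd e ∈ B) := by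
          intro hc
          exact hhdS (Finset.mem_filter.mp hc).2.2
        have hn2 : Sᶜ ∉ (Gamma m Finset.univ).filter
            (fun B => tl e ∈ B ∧ hd e ∈ B) := by
          intro hc
          exact (Finset.mem_compl.mp (Finset.mem_filter.mp hc).2.1) htlS
        rw [if_pos rfl, if_neg hn1, if_neg hn2]
        norm_num
      · rw [if_neg he]
        by_cases htle : tl e ∈ S
        · have hhde : hd e ∈ S := (hsame e he).mp htle
          have hn2 : Sᶜ ∉ (Gamma m Finset.univ).filter
              (fun B => tl e ∈ B ∧ hd e ∈ B) := by
            intro hc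
            exact (Finset.mem_compl.mp (Finset.mem_filter.mp hc).2.1) htle
          have hyes : S ∈ (Gamma m Finset.univ).filter
              (fun B => tl e ∈ B ∧ hd e ∈ B) :=
            Finset.mem_filter.mpr ⟨hSG, htle, hhde⟩
          rw [if_pos hyes, if_neg hn2]
          norm_num
        · have hhde : hd e ∉ S := fun h => htle ((hsame e he).mpr h)
          have hn1 : S ∉ (Gamma m Finset.univ).filter
              (fun B => tl e ∈ B ∧ hd e ∈ B) := by
            intro hc
            exact htle (Finset.mem_filter.mp hc).2.1
          have hyes : Sᶜ ∈ (Gamma m Finset.univ).filter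
              (fun B => tl e ∈ B ∧ hd e ∈ B) :=
            Finset.mem_filter.mpr ⟨hScG, Finset.mem_compl.mpr htle,
              Finset.mem_compl.mpr hhde⟩
          rw [if_neg hn1, if_pos hyes]
          norm_num
    rw [Finset.sum_congr rfl (fun e _ => by rw [haw e])]
    rw [Finset.sum_eq_single estar
      (fun e _ hne => by rw [if_neg hne]; ring)
      (fun h => absurd (Finset.mem_univ estar) h)]
    rw [if_pos rfl, hMI]
    ring
  · -- lower bound
    rintro x ⟨lam, hlam, rfl⟩
    rw [hval lam hlam]
    calc (⨅ e : ε, mutualInfo p (Te e) (Ye e))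
        = 1 * (⨅ e : ε, mutualInfo p (Te e) (Ye e)) := (one_mul _).symm
      _ ≤ (∑ e, (1 - ∑ B ∈ (Gamma m Finset.univ).filter
            (fun B => tl e ∈ B ∧ hd e ∈ B), lam B))
          * (⨅ e : ε, mutualInfo p (Te e) (Ye e)) :=
        mul_le_mul_of_nonneg_right (hcomb lam hlam) hM0
      _ = ∑ e, (1 - ∑ B ∈ (Gamma m Finset.univ).filter
            (fun B => tl e ∈ B ∧ hd e ∈ B), lam B)
          * (⨅ e : ε, mutualInfo p (Te e) (Ye e)) := Finset.sum_mul _ _ _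
      _ ≤ ∑ e, (1 - ∑ B ∈ (Gamma m Finset.univ).filter
            (fun B => tl e ∈ B ∧ hd e ∈ B), lam B) * mutualInfo p (Te e) (Ye e) :=
        Finset.sum_le_sum (fun e _ =>
          mul_le_mul_of_nonneg_left (hM_le e) (hwnn lam hlam e))
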